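/- Let (R, m) be a Noetherian local ring, B a commutative R-algebra, and x₁, …, x_d ∈ m elements whose images in B form a B-regular sequence. If the ideal (x₁, …, x_d)R is contracted from B, then x₁, …, x_d is an R-regular sequence; in particular, if x₁, …, x_d is a system of parameters of R, then R is Cohen–Macaulay. -/

import Mathlib

open Ideal RingTheory.Sequence

section Aux

variable {A : Type*} [CommRing A]

/-- The ideal generated by the first `k` entries of a tuple. -/
private def pIdeal {n : ℕ} (z : Fin n → A) (k : ℕ) : Ideal A :=
  Ideal.span (Set.range fun j : Fin n => if (j : ℕ) < k then z j else 0)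

private lemma pIdeal_mono {n : ℕ} (z : Fin n → A) {k k' : ℕ} (h : k ≤ k') :
    pIdeal z k ≤ pIdeal z k' := by
  rw [pIdeal, Ideal.span_le]
  rintro r ⟨j, rfl⟩
  by_cases hj : (j : ℕ) < k
  · have : (if (j : ℕ) < k' then z j else 0) = z j := if_pos (lt_of_lt_of_le hj h)
    simpa [hj] using this ▸ Ideal.subset_span ⟨j, rfl⟩
  · simp [hj]

private lemma pIdeal_top {n : ℕ} (z : Fin n → A) : pIdeal z n = Ideal.span (Set.range z) := by
  unfold pIdeal
  congr 1
  ext r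
  constructor
  · rintro ⟨j, rfl⟩; exact ⟨j, by simp [j.isLt]⟩
  · rintro ⟨j, rfl⟩; exact ⟨j, by simp [j.isLt]⟩

private lemma ofList_take_eq_pIdeal {n : ℕ} (z : Fin n → A) (k : ℕ) :
    Ideal.ofList ((List.ofFn z).take k) = pIdeal z k := by
  apply le_antisymm
  · rw [Ideal.span_le]
    intro r hr
    obtain ⟨i, hi, rfl⟩ := List.mem_iff_getElem.mp hr
    rw [List.length_take, List.length_ofFn] at hi
    have h1 : i < k := lt_of_lt_of_le hi (min_le_left _ _)
    have h2 : i < n := lt_of_lt_of_le hi (min_le_right _ _)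
    have : ((List.ofFn z).take k)[i] = z ⟨i, h2⟩ := by
      rw [List.getElem_take, List.getElem_ofFn]
    rw [this]
    exact Ideal.subset_span ⟨⟨i, h2⟩, by simp [h1]⟩
  · rw [pIdeal, Ideal.span_le]
    rintro r ⟨j, rfl⟩
    by_cases hj : (j : ℕ) < k
    · simp only [hj, if_pos]
      apply Ideal.subset_span
      show z j ∈ (List.ofFn z).take k
      apply List.mem_iff_getElem.mpr
      refine ⟨j, ?_, ?_⟩
      · rw [List.length_take, List.length_ofFn]; exact lt_min hj j.isLt
      · rw [List.getElem_take, List.getElem_ofFn]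
    · simp [hj]

private lemma isSMulRegular_quot_iff (I : Ideal A) (c : A) :
    IsSMulRegular (A ⧸ (I • ⊤ : Submodule A A)) c ↔ ∀ b : A, c * b ∈ I → b ∈ I := by
  have hIT : (I • ⊤ : Submodule A A) = I := by
    rw [Ideal.smul_eq_mul, Ideal.mul_top]
  rw [hIT]
  constructor
  · intro hreg b hb
    have h0 : c • (Submodule.Quotient.mk b : A ⧸ (I : Submodule A A)) = c • 0 := by
      rw [smul_zero, ← Submodule.Quotient.mk_smul, Submodule.Quotient.mk_eq_zero]
      simp only [smul_eq_mul]
      exact hb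
    have := hreg h0
    simpa [Submodule.Quotient.mk_eq_zero, Ideal.Quotient.eq_zero_iff_mem] using this
  · intro h p q hpq
    obtain ⟨a, rfl⟩ := Submodule.Quotient.mk_surjective _ p
    obtain ⟨b, rfl⟩ := Submodule.Quotient.mk_surjective _ q
    have hpq' : c • (Submodule.Quotient.mk a : A ⧸ (I : Submodule A A)) =
        c • (Submodule.Quotient.mk b) := hpq
    rw [← Submodule.Quotient.mk_smul, ← Submodule.Quotient.mk_smul,
      Submodule.Quotient.eq] at hpq'
    rw [Submodule.Quotient.eq]
    have : c * (a - b) ∈ I := by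
      simpa [smul_eq_mul, mul_sub] using hpq'
    exact h _ this

private lemma isWeaklyRegular_ofFn_iff {n : ℕ} (z : Fin n → A) :
    IsWeaklyRegular A (List.ofFn z) ↔
      ∀ (j : Fin n) (b : A), z j * b ∈ pIdeal z (j : ℕ) → b ∈ pIdeal z (j : ℕ) := by
  rw [isWeaklyRegular_iff]
  constructor
  · intro H j
    have h := H (j : ℕ) (by simp only [List.length_ofFn]; exact j.isLt)
    rw [ofList_take_eq_pIdeal] at h
    have he : (List.ofFn z)[(j : ℕ)]'(by simp only [List.length_ofFn]; exact j.isLt) = z j := by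
      rw [List.getElem_ofFn]
    rw [he] at h
    exact (isSMulRegular_quot_iff _ _).mp h
  · intro H i hi
    rw [ofList_take_eq_pIdeal]
    have hi' : i < n := by simpa using hi
    have he : (List.ofFn z)[i]'hi = z ⟨i, hi'⟩ := by rw [List.getElem_ofFn]
    rw [he]
    exact (isSMulRegular_quot_iff _ _).mpr (H ⟨i, hi'⟩)

private lemma krull_lemma {R : Type*} [CommRing R] [IsNoetherianRing R] [IsLocalRing R]
    {I : Ideal R} (hI : I ≤ IsLocalRing.maximalIdeal R) {r : R}
    (h : ∀ n : ℕ, r ∈ I ⊔ IsLocalRing.maximalIdeal R ^ n) : r ∈ I := by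
  set m := IsLocalRing.maximalIdeal R with hm
  have hInetop : I ≠ ⊤ := fun hh =>
    (IsLocalRing.maximalIdeal.isMaximal R).ne_top (top_le_iff.mp (hh ▸ hI))
  have : Nontrivial (R ⧸ I) := Ideal.Quotient.nontrivial_iff.mpr hInetop
  have : IsLocalRing (R ⧸ I) :=
    IsLocalRing.of_surjective' (Ideal.Quotient.mk I) Ideal.Quotient.mk_surjective
  have hmq : Ideal.map (Ideal.Quotient.mk I) m ≠ ⊤ := by
    intro htop
    have := Ideal.comap_map_of_surjective (Ideal.Quotient.mk I)
      Ideal.Quotient.mk_surjective m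
    rw [htop] at this
    rw [Ideal.comap_top] at this
    rw [← RingHom.ker_eq_comap_bot, Ideal.mk_ker] at this
    have : m = ⊤ := by
      rw [← sup_eq_left.mpr hI, this]
    exact (IsLocalRing.maximalIdeal.isMaximal R).ne_top this
  have hq : ∀ n : ℕ, Ideal.Quotient.mk I r ∈ Ideal.map (Ideal.Quotient.mk I) m ^ n := by
    intro n
    have := Ideal.mem_map_of_mem (Ideal.Quotient.mk I) (h n)
    rwa [Ideal.map_sup, Ideal.map_quotient_self, Ideal.map_pow, bot_sup_eq] at this
  have hbot := Ideal.iInf_pow_eq_bot_of_isLocalRing (Ideal.map (Ideal.Quotient.mk I) m) hmq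
  have : Ideal.Quotient.mk I r ∈ (⊥ : Ideal (R ⧸ I)) := by
    rw [← hbot]
    exact Ideal.mem_iInf.mpr hq
  rwa [Ideal.mem_bot, Ideal.Quotient.eq_zero_iff_mem] at this

end Aux

section Aux2
variable {A : Type*} [CommRing A]

private lemma pIdeal_succ {n : ℕ} (z : Fin n → A) {k : ℕ} (j : Fin n) (hj : (j : ℕ) = k) :
    pIdeal z (k + 1) = pIdeal z k ⊔ Ideal.span {z j} := by
  apply le_antisymm
  · rw [pIdeal, Ideal.span_le]
    rintro r ⟨t, rfl⟩
    dsimp only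
    rcases lt_trichotomy (t : ℕ) k with ht | ht | ht
    · refine Ideal.mem_sup_left ?_
      have he : (if (t : ℕ) < k + 1 then z t else 0) = (if (t : ℕ) < k then z t else 0) := by
        simp [ht, Nat.lt_succ_of_lt ht]
      rw [he]
      exact Ideal.subset_span ⟨t, rfl⟩
    · have htj : t = j := Fin.ext (by omega)
      have he : (if (t : ℕ) < k + 1 then z t else 0) = z j := by
        subst htj; simp [ht]
      rw [he]
      exact Ideal.mem_sup_right (Ideal.subset_span rfl)
    · have he : (if (t : ℕ) < k + 1 then z t else 0) = 0 := by rw [if_neg (by omega)]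
      rw [he]; exact zero_mem _
  · refine sup_le (pIdeal_mono z (Nat.le_succ k)) ?_
    rw [Ideal.span_singleton_le_iff_mem]
    exact Ideal.subset_span ⟨j, by simp [hj]⟩

end Aux2

/-- If the images of `x 1, …, x d ∈ m` form a `B`-regular sequence and
`(x 1, …, x d) R` is contracted from `B`, then `x 1, …, x d` is an `R`-regular
sequence; in particular, if `x` is a system of parameters of `R`, then `R` is
Cohen–Macaulay (it admits a system of parameters which is a regular sequence). -/
theorem stmt_9 {R B : Type*} [CommRing R] [IsLocalRing R] [IsNoetherianRing R]
    [CommRing B] [Algebra R B] (d : ℕ) (x : Fin d → R)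
    (hx : ∀ i, x i ∈ IsLocalRing.maximalIdeal R)
    (hreg : RingTheory.Sequence.IsRegular B ((List.ofFn x).map (algebraMap R B)))
    (hcontr : Ideal.span (Set.range x) =
      Ideal.comap (algebraMap R B)
        (Ideal.map (algebraMap R B) (Ideal.span (Set.range x)))) :
    RingTheory.Sequence.IsRegular R (List.ofFn x) ∧
      ((∃ k : ℕ, IsLocalRing.maximalIdeal R ^ k ≤ Ideal.span (Set.range x)) ∧
          ringKrullDim R = (d : WithBot (WithTop ℕ)) →
        ∃ (e : ℕ) (y : Fin e → R), (∀ i, y i ∈ IsLocalRing.maximalIdeal R) ∧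
          (∃ k : ℕ, IsLocalRing.maximalIdeal R ^ k ≤ Ideal.span (Set.range y)) ∧
          ringKrullDim R = (e : WithBot (WithTop ℕ)) ∧
          RingTheory.Sequence.IsRegular R (List.ofFn y)) := by
  set φ := algebraMap R B with hφ
  have hIBmap : ∀ k : ℕ, pIdeal (φ ∘ x) k = Ideal.map φ (pIdeal x k) := by
    intro k
    rw [pIdeal, pIdeal, Ideal.map_span, ← Set.range_comp]
    have he : φ ∘ (fun j : Fin d => if (j : ℕ) < k then x j else 0)
        = fun j : Fin d => if (j : ℕ) < k then φ (x j) else 0 := by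
      funext j; by_cases h : (j : ℕ) < k <;> simp [h]
    rw [he]
    rfl
  have hwr : IsWeaklyRegular B (List.ofFn (φ ∘ x)) := by
    have h := hreg.toIsWeaklyRegular
    rwa [List.map_ofFn] at h
  have hreg1 : ∀ (j : Fin d) (b : B),
      φ (x j) * b ∈ pIdeal (φ ∘ x) (j : ℕ) → b ∈ pIdeal (φ ∘ x) (j : ℕ) :=
    (isWeaklyRegular_ofFn_iff _).mp hwr
  have hIm : ∀ k : ℕ, pIdeal x k ≤ IsLocalRing.maximalIdeal R := by
    intro k
    rw [pIdeal, Ideal.span_le]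
    rintro r ⟨t, rfl⟩
    dsimp only
    split_ifs with h
    · exact hx t
    · exact zero_mem _
  have key : ∀ t k, k + t = d → Ideal.comap φ (pIdeal (φ ∘ x) k) ≤ pIdeal x k := by
    intro t
    induction t with
    | zero =>
      intro k hk
      have hkd : k = d := by omega
      subst hkd
      rw [hIBmap, pIdeal_top]
      exact hcontr.ge
    | succ t ih =>
      intro k hk
      have hkd : k < d := by omega
      set j : Fin d := ⟨k, hkd⟩ with hjdef
      have IH := ih (k + 1) (by omega)
      set J := Ideal.comap φ (pIdeal (φ ∘ x) k) with hJ
      set P := Ideal.span {x j} with hP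
      have stepA : J ≤ pIdeal x k ⊔ P * J := by
        intro r hr
        have hφr : φ r ∈ pIdeal (φ ∘ x) k := Ideal.mem_comap.mp hr
        have hr1 : r ∈ pIdeal x (k + 1) :=
          IH (Ideal.mem_comap.mpr (pIdeal_mono _ (Nat.le_succ k) hφr))
        rw [pIdeal_succ x j rfl] at hr1
        obtain ⟨s, hs, c, hc, rfl⟩ := Submodule.mem_sup.mp hr1
        obtain ⟨a, rfl⟩ := Ideal.mem_span_singleton'.mp hc
        have hφs : φ s ∈ pIdeal (φ ∘ x) k := by
          rw [hIBmap]; exact Ideal.mem_map_of_mem φ hs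
        have hmul : φ (x j) * φ a ∈ pIdeal (φ ∘ x) k := by
          have he : φ (x j) * φ a = φ (s + a * x j) - φ s := by
            rw [map_add, _root_.map_mul]; ring
          rw [he]
          exact sub_mem hφr hφs
        have ha : a ∈ J := Ideal.mem_comap.mpr (hreg1 j (φ a) hmul)
        refine Submodule.mem_sup.mpr ⟨s, hs, a * x j, ?_, rfl⟩
        have hmem : x j * a ∈ P * J :=
          Ideal.mul_mem_mul (Ideal.mem_span_singleton_self (x j)) ha
        rwa [mul_comm (x j) a] at hmem
      have stepB : ∀ n : ℕ, J ≤ pIdeal x k ⊔ P ^ n * J := by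
        intro n
        induction n with
        | zero =>
          rw [pow_zero, Ideal.one_eq_top, Ideal.top_mul]
          exact le_sup_right
        | succ n ihn =>
          refine ihn.trans (sup_le le_sup_left ?_)
          calc P ^ n * J ≤ P ^ n * (pIdeal x k ⊔ P * J) := Ideal.mul_mono_right stepA
            _ = P ^ n * pIdeal x k ⊔ P ^ n * (P * J) := Ideal.mul_sup _ _ _
            _ ≤ pIdeal x k ⊔ P ^ (n + 1) * J := by
                refine sup_le_sup Ideal.mul_le_right (le_of_eq ?_)
                rw [pow_succ, mul_assoc]
      intro r hr
      refine krull_lemma (hIm k) ?_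
      intro n
      have h1 := stepB n hr
      have h2 : P ^ n * J ≤ (IsLocalRing.maximalIdeal R) ^ n := by
        refine le_trans Ideal.mul_le_left (Ideal.pow_right_mono ?_ n)
        rw [hP, Ideal.span_singleton_le_iff_mem]
        exact hx j
      exact (sup_le_sup_left h2 _) h1
  have hwR : IsWeaklyRegular R (List.ofFn x) := by
    rw [isWeaklyRegular_ofFn_iff]
    intro j b hb
    have hφb : φ (x j) * φ b ∈ pIdeal (φ ∘ x) (j : ℕ) := by
      have h := Ideal.mem_map_of_mem φ hb
      rw [← hIBmap] at h
      rwa [_root_.map_mul] at h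
    have h := hreg1 j (φ b) hφb
    have hjd := j.isLt
    exact key (d - (j : ℕ)) (j : ℕ) (by omega) (Ideal.mem_comap.mpr h)
  have hofle : Ideal.ofList (List.ofFn x) ≤ IsLocalRing.maximalIdeal R := by
    rw [Ideal.span_le]
    intro r hr
    obtain ⟨j, rfl⟩ := List.mem_ofFn.mp hr
    exact hx j
  have hRreg : IsRegular R (List.ofFn x) := by
    refine ⟨hwR, ?_⟩
    intro htop
    have hT : (⊤ : Ideal R) = Ideal.ofList (List.ofFn x) :=
      htop.trans (by rw [Ideal.smul_eq_mul, Ideal.mul_top])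
    exact (IsLocalRing.maximalIdeal.isMaximal R).ne_top
      (top_le_iff.mp ((le_of_eq hT).trans hofle))
  refine ⟨hRreg, ?_⟩
  rintro ⟨hk, hdim⟩
  exact ⟨d, x, hx, hk, hdim, hRreg⟩
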